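/- arXiv:1611.01645 — 2 statements merged into one kernel-verified Lean document; each statement's English description precedes it below -/
import Mathlib

section
/- There exists a truth assignment u ∈ {0,1}^m such that every clause C_1,…,C_n has exactly one literal made true by u, if and only if the maximum of ⟨w,x⟩ over x ∈ SATP_LP(m,n) equals 3n and the maximum of ⟨w,z⟩ over the integral points z of SATP_LP(m,n) equals 3n. -/
open Finset

/-- A point of ℝ^{6mn}: coordinates x^{k,l}_{i,j} with `i : Fin m`, `j : Fin n`,
`k : Fin 3` (the paper's k-1, since the paper indexes k ∈ {1,2,3}) and
`l : Fin 2` (the paper's l-1). -/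
abbrev Pt (m n : ℕ) := Fin m → Fin n → Fin 3 → Fin 2 → ℝ

/-- The relaxation polytope SATP_LP(m,n), given by the constraints (i)-(iv). -/
def SATPLP (m n : ℕ) : Set (Pt m n) :=
  {x | (∀ i j, ∑ k, ∑ l, x i j k l = 1) ∧
       (∀ i j t, ∑ k, x i j k 0 = ∑ k, x i t k 0) ∧
       (∀ k j i s, x i j k 0 + x i j k 1 = x s j k 0 + x s j k 1) ∧
       (∀ i j k l, 0 ≤ x i j k l)}

/-- The integral points of SATP_LP(m,n): the points all of whose coordinates are 0 or 1. -/
def IntPts (m n : ℕ) : Set (Pt m n) :=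
  {x | x ∈ SATPLP m n ∧ ∀ i j k l, x i j k l = 0 ∨ x i j k l = 1}

/-- SATP(m,n): the convex hull of the integral points of SATP_LP(m,n). -/
def SATP (m n : ℕ) : Set (Pt m n) := convexHull ℝ (IntPts m n)

/-- Standard inner product on ℝ^{6mn}. -/
def dotp {m n : ℕ} (v x : Pt m n) : ℝ :=
  ∑ i, ∑ j, ∑ k, ∑ l, v i j k l * x i j k l

/-- A 3-clause over m Boolean variables: the literal at each of the three places.
A literal is a pair (variable, sign) where sign `0` is positive (the paper's s = 1)
and sign `1` is negated (the paper's s = 2). -/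
abbrev Clause (m : ℕ) := Fin 3 → Fin m × Fin 2

/-- Truth assignment u makes the literal (i,s) true iff s is positive and u i = 1,
or s is negated and u i = 0. -/
def LitTrue {m : ℕ} (u : Fin m → Fin 2) (lit : Fin m × Fin 2) : Prop :=
  (lit.2 = 0 ∧ u lit.1 = 1) ∨ (lit.2 = 1 ∧ u lit.1 = 0)

/-- Sign flip, the paper's s ↦ 3 - s (also serving as u_i = 1 - r_i). -/
def flipSign (s : Fin 2) : Fin 2 := if s = 0 then 1 else 0

/-- The X3SAT objective vector w: if clause C_j has literal (i,s) at place k then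
w^{k,s}_{i,j} = 1 and w^{q,3-s}_{i,j} = 1 for both places q ≠ k; all other coordinates
are 0. -/
def wVec {m n : ℕ} (C : Fin n → Clause m) : Pt m n :=
  fun i j k s => if C j k = (i, s) ∨ ∃ q, q ≠ k ∧ C j q = (i, flipSign s) then 1 else 0


lemma flipSign_flip_flip : ∀ s : Fin 2, flipSign (flipSign s) = s := by decide
lemma eq_flip_of_ne : ∀ a b : Fin 2, a ≠ flipSign b → a = b := by decide
lemma flip_comm_eq : ∀ a b : Fin 2, (a = flipSign b) ↔ (flipSign a = b) := by decide
lemma litTrue_iff' : ∀ (a : Fin 2) (s : Fin 2),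
    ((s = 0 ∧ a = 1) ∨ (s = 1 ∧ a = 0)) ↔ a = flipSign s := by decide

lemma litTrue_iff {m : ℕ} (u : Fin m → Fin 2) (p : Fin m × Fin 2) :
    LitTrue u p ↔ u p.1 = flipSign p.2 := litTrue_iff' (u p.1) p.2

lemma all_eq_one {α : Type*} [Fintype α] (f : α → ℝ) (hle : ∀ a, f a ≤ 1)
    (hsum : ∑ a, f a = (Fintype.card α : ℝ)) : ∀ a, f a = 1 := by
  intro a
  by_contra h
  have hlt : f a < 1 := lt_of_le_of_ne (hle a) h
  have : ∑ x, f x < ∑ _x : α, (1:ℝ) :=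
    Finset.sum_lt_sum (fun i _ => hle i) ⟨a, Finset.mem_univ a, hlt⟩
  rw [hsum, Finset.sum_const, Finset.card_univ, nsmul_eq_mul, mul_one] at this
  exact lt_irrefl _ this

lemma exists_slot {α : Type*} [Fintype α] [DecidableEq α] (f : α → ℝ)
    (h01 : ∀ a, f a = 0 ∨ f a = 1) (hsum : ∑ a, f a = 1) :
    ∃ a, f a = 1 ∧ ∀ b, b ≠ a → f b = 0 := by
  obtain ⟨a, ha⟩ := Finset.exists_ne_zero_of_sum_ne_zero (by rw [hsum]; exact one_ne_zero)
  have ha1 : f a = 1 := (h01 a).resolve_left ha.2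
  refine ⟨a, ha1, ?_⟩
  have hz : ∑ b ∈ Finset.univ.erase a, f b = 0 := by
    have := Finset.add_sum_erase Finset.univ f (Finset.mem_univ a)
    rw [hsum, ha1] at this; linarith
  intro b hb
  have := (Finset.sum_eq_zero_iff_of_nonneg (fun b _ => by rcases h01 b with h|h <;> rw [h] <;> norm_num)).mp hz b (Finset.mem_erase.mpr ⟨hb, Finset.mem_univ b⟩)
  exact this

lemma wVec_eq {m n : ℕ} (C : Fin n → Clause m)
    (hdist : ∀ j, Function.Injective fun k => (C j k).1)
    (i : Fin m) (j : Fin n) (k : Fin 3) (l : Fin 2) :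
    wVec C i j k l = (if C j k = (i, l) then (1:ℝ) else 0)
      + ∑ q ∈ Finset.univ.erase k, (if C j q = (i, flipSign l) then (1:ℝ) else 0) := by
  unfold wVec
  by_cases h1 : C j k = (i, l)
  · rw [if_pos (Or.inl h1), if_pos h1, Finset.sum_eq_zero, add_zero]
    intro q hq
    rw [if_neg]
    intro h
    have : (fun k => (C j k).1) q = (fun k => (C j k).1) k := by simp [h, h1]
    exact (Finset.mem_erase.mp hq).1 (hdist j this)
  · by_cases h2 : ∃ q, q ≠ k ∧ C j q = (i, flipSign l)
    · obtain ⟨q, hqk, hq⟩ := h2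
      rw [if_pos (Or.inr ⟨q, hqk, hq⟩), if_neg h1,
        Finset.sum_eq_single_of_mem q (Finset.mem_erase.mpr ⟨hqk, Finset.mem_univ q⟩)]
      · rw [if_pos hq]; ring
      · intro q' _ hne
        rw [if_neg]
        intro h
        have : (fun k => (C j k).1) q' = (fun k => (C j k).1) q := by simp [h, hq]
        exact hne (hdist j this)
    · rw [if_neg, if_neg h1, Finset.sum_eq_zero, add_zero]
      · intro q hq
        rw [if_neg]
        intro h
        exact h2 ⟨q, (Finset.mem_erase.mp hq).1, h⟩
      · rintro (h | h)
        · exact h1 h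
        · exact h2 h

lemma sum_erase_comm {α : Type*} [Fintype α] [DecidableEq α] (g : α → α → ℝ) :
    ∑ k, ∑ q ∈ Finset.univ.erase k, g q k = ∑ q, ∑ k ∈ Finset.univ.erase q, g q k := by
  have h : ∀ b : α, Finset.univ.erase b = Finset.univ.filter (· ≠ b) :=
    fun b => (Finset.filter_ne' Finset.univ b).symm
  simp only [h, Finset.sum_filter]
  rw [Finset.sum_comm]
  exact Finset.sum_congr rfl fun q _ => Finset.sum_congr rfl fun k _ =>
    if_congr ne_comm rfl rfl

lemma dotp_wVec {m n : ℕ} (C : Fin n → Clause m)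
    (hdist : ∀ j, Function.Injective fun k => (C j k).1) (x : Pt m n) :
    dotp (wVec C) x = ∑ j, ∑ q, (x (C j q).1 j q (C j q).2
      + ∑ k ∈ Finset.univ.erase q, x (C j q).1 j k (flipSign (C j q).2)) := by
  unfold dotp
  rw [Finset.sum_comm]
  refine Finset.sum_congr rfl fun j _ => ?_
  rw [Finset.sum_comm]
  have key : ∀ k : Fin 3, ∑ i, ∑ l, wVec C i j k l * x i j k l
      = x (C j k).1 j k (C j k).2
        + ∑ q ∈ Finset.univ.erase k, x (C j q).1 j k (flipSign (C j q).2) := by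
    intro k
    have hw : ∀ i l, wVec C i j k l * x i j k l
        = (if C j k = (i, l) then x i j k l else 0)
          + ∑ q ∈ Finset.univ.erase k, (if C j q = (i, flipSign l) then x i j k l else 0) := by
      intro i l
      rw [wVec_eq C hdist, add_mul, Finset.sum_mul]
      simp [ite_mul]
    simp only [hw, Finset.sum_add_distrib]
    congr 1
    · rw [Finset.sum_comm]
      simp [Prod.ext_iff, ite_and, Finset.sum_ite_eq]
    · have swap1 : ∀ i : Fin m, ∑ l, ∑ q ∈ Finset.univ.erase k,
          (if C j q = (i, flipSign l) then x i j k l else 0)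
          = ∑ q ∈ Finset.univ.erase k, ∑ l,
            (if C j q = (i, flipSign l) then x i j k l else 0) :=
        fun i => Finset.sum_comm
      simp only [swap1]
      rw [Finset.sum_comm]
      refine Finset.sum_congr rfl fun q _ => ?_
      rw [Finset.sum_comm]
      have hiff : ∀ l i, (C j q = (i, flipSign l)) ↔ ((C j q).1 = i ∧ flipSign (C j q).2 = l) := by
        intro l i
        rw [Prod.ext_iff]
        exact and_congr Iff.rfl (flip_comm_eq _ _)
      simp [hiff, ite_and, Finset.sum_ite_eq]
  simp only [key]
  rw [Finset.sum_add_distrib, Finset.sum_add_distrib,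
    sum_erase_comm (fun q k => x (C j q).1 j k (flipSign (C j q).2))]

lemma term_le_one {m n : ℕ} {x : Pt m n} (hx : x ∈ SATPLP m n)
    (i : Fin m) (j : Fin n) (q : Fin 3) (s : Fin 2) :
    x i j q s + ∑ k ∈ Finset.univ.erase q, x i j k (flipSign s) ≤ 1 := by
  obtain ⟨hsum, _, _, hnn⟩ := hx
  have h1 : ∀ (k : Fin 3) (l : Fin 2), x i j k l ≤ x i j k 0 + x i j k 1 := by
    intro k l
    fin_cases l
    · show x i j k 0 ≤ x i j k 0 + x i j k 1
      linarith [hnn i j k 1]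
    · show x i j k 1 ≤ x i j k 0 + x i j k 1
      linarith [hnn i j k 0]
  have h2 : x i j q s + ∑ k ∈ Finset.univ.erase q, x i j k (flipSign s)
      ≤ (x i j q 0 + x i j q 1) + ∑ k ∈ Finset.univ.erase q, (x i j k 0 + x i j k 1) :=
    add_le_add (h1 q s) (Finset.sum_le_sum fun k _ => h1 k _)
  have h3 : (x i j q 0 + x i j q 1) + ∑ k ∈ Finset.univ.erase q, (x i j k 0 + x i j k 1)
      = ∑ k, (x i j k 0 + x i j k 1) :=
    Finset.add_sum_erase Finset.univ (fun k => x i j k 0 + x i j k 1) (Finset.mem_univ q)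
  have h4 : ∑ k : Fin 3, (x i j k 0 + x i j k 1) = 1 := by
    rw [← hsum i j]
    exact Finset.sum_congr rfl fun k _ => (Fin.sum_univ_two _).symm
  linarith

lemma dotp_le {m n : ℕ} (C : Fin n → Clause m)
    (hdist : ∀ j, Function.Injective fun k => (C j k).1)
    {x : Pt m n} (hx : x ∈ SATPLP m n) : dotp (wVec C) x ≤ 3 * (n : ℝ) := by
  rw [dotp_wVec C hdist]
  calc ∑ j, ∑ q, (x (C j q).1 j q (C j q).2
        + ∑ k ∈ Finset.univ.erase q, x (C j q).1 j k (flipSign (C j q).2))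
      ≤ ∑ _j : Fin n, ∑ _q : Fin 3, (1:ℝ) :=
        Finset.sum_le_sum fun j _ => Finset.sum_le_sum fun q _ => term_le_one hx _ _ _ _
    _ = 3 * (n : ℝ) := by simp; ring

lemma flip_ne : ∀ s : Fin 2, flipSign s ≠ s := by decide

lemma pair_ite {k K : Fin 3} : ∀ a : Fin 2,
    ((if ((0:Fin 2) = a ∧ k = K) then (1:ℝ) else 0)
      + (if ((1:Fin 2) = a ∧ k = K) then (1:ℝ) else 0)) = if k = K then 1 else 0 := by
  intro a
  by_cases hP : k = K <;> fin_cases a <;> simp [hP, Fin.ext_iff]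

lemma forward {m n : ℕ} (C : Fin n → Clause m)
    (hdist : ∀ j, Function.Injective fun k => (C j k).1)
    (u : Fin m → Fin 2) (hu : ∀ j, ∃! k, LitTrue u (C j k)) :
    ∃ z ∈ IntPts m n, dotp (wVec C) z = 3 * (n : ℝ) := by
  classical
  set K : Fin n → Fin 3 := fun j => (hu j).choose with hKdef
  have hK1 : ∀ j, LitTrue u (C j (K j)) := fun j => (hu j).choose_spec.1
  have hK2 : ∀ j y, LitTrue u (C j y) → y = K j := fun j => (hu j).choose_spec.2
  set z : Pt m n := fun i j k l => if l = flipSign (u i) ∧ k = K j then (1:ℝ) else 0 with hzdef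
  have hmem : z ∈ IntPts m n := by
    refine ⟨⟨?_, ?_, ?_, ?_⟩, ?_⟩
    · intro i j
      simp [hzdef, ite_and, Finset.sum_ite_eq', Finset.sum_ite_eq]
    · intro i j t
      simp [hzdef, ite_and, Finset.sum_ite_eq', Finset.sum_ite_eq]
    · intro k j i s
      show (if ((0:Fin 2) = flipSign (u i) ∧ k = K j) then (1:ℝ) else 0)
          + (if ((1:Fin 2) = flipSign (u i) ∧ k = K j) then (1:ℝ) else 0)
        = (if ((0:Fin 2) = flipSign (u s) ∧ k = K j) then (1:ℝ) else 0)
          + (if ((1:Fin 2) = flipSign (u s) ∧ k = K j) then (1:ℝ) else 0)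
      rw [pair_ite, pair_ite]
    · intro i j k l
      simp only [hzdef]
      split <;> norm_num
    · intro i j k l
      simp only [hzdef]
      split
      · right; rfl
      · left; rfl
  refine ⟨z, hmem, ?_⟩
  rw [dotp_wVec C hdist]
  have key : ∀ j q, z (C j q).1 j q (C j q).2
      + ∑ k ∈ Finset.univ.erase q, z (C j q).1 j k (flipSign (C j q).2) = 1 := by
    intro j q
    by_cases hq : q = K j
    · have hlit : LitTrue u (C j q) := hq ▸ hK1 j
      have hu1 : u (C j q).1 = flipSign (C j q).2 := (litTrue_iff u _).mp hlit
      have hs : (C j q).2 = flipSign (u (C j q).1) := by rw [hu1, flipSign_flip_flip]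
      have hz1 : z (C j q).1 j q (C j q).2 = 1 := by
        simp only [hzdef]; rw [if_pos ⟨hs, hq⟩]
      rw [hz1, Finset.sum_eq_zero, add_zero]
      intro k hk
      simp only [hzdef]
      rw [if_neg]
      rintro ⟨-, hkK⟩
      exact (Finset.mem_erase.mp hk).1 (hkK.trans hq.symm)
    · have hnlit : ¬ LitTrue u (C j q) := fun h => hq (hK2 j q h)
      have hu1 : u (C j q).1 = (C j q).2 :=
        eq_flip_of_ne _ _ (fun h => hnlit ((litTrue_iff u _).mpr h))
      have hfs : flipSign (C j q).2 = flipSign (u (C j q).1) := by rw [hu1]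
      have hz0 : z (C j q).1 j q (C j q).2 = 0 := by
        simp only [hzdef]
        rw [if_neg]
        rintro ⟨hs, -⟩
        exact flip_ne (C j q).2 (hu1 ▸ hs.symm)
      rw [hz0, zero_add]
      simp only [hzdef]
      simp only [hfs, true_and, eq_self_iff_true]
      rw [Finset.sum_ite_eq' (Finset.univ.erase q) (K j) (fun _ => (1:ℝ))]
      rw [if_pos (Finset.mem_erase.mpr ⟨Ne.symm hq, Finset.mem_univ _⟩)]
  simp only [key]
  simp; ring

lemma fin2_cases : ∀ a : Fin 2, a = 0 ∨ a = 1 := by decide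
lemma fin2_eq_of_iff : ∀ a b : Fin 2, (a = 0 ↔ b = 0) → a = b := by decide

lemma backward {m n : ℕ} (C : Fin n → Clause m)
    (hdist : ∀ j, Function.Injective fun k => (C j k).1)
    {z : Pt m n} (hz : z ∈ IntPts m n) (hdz : dotp (wVec C) z = 3 * (n : ℝ)) :
    ∃ u : Fin m → Fin 2, ∀ j, ∃! k, LitTrue u (C j k) := by
  classical
  rcases Nat.eq_zero_or_pos n with hn | hn
  · subst hn
    exact ⟨fun _ => 0, fun j => j.elim0⟩
  obtain ⟨⟨hsum, hii, hiii, hnn⟩, h01⟩ := hz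
  set j₀ : Fin n := ⟨0, hn⟩ with hj0
  -- slots
  have hslot : ∀ i j, ∃ p : Fin 3 × Fin 2, z i j p.1 p.2 = 1
      ∧ ∀ q : Fin 3 × Fin 2, q ≠ p → z i j q.1 q.2 = 0 := by
    intro i j
    apply exists_slot (f := fun p : Fin 3 × Fin 2 => z i j p.1 p.2)
    · exact fun p => h01 i j p.1 p.2
    · rw [Fintype.sum_prod_type]; exact hsum i j
  set KP : Fin m → Fin n → Fin 3 × Fin 2 := fun i j => (hslot i j).choose with hKPdef
  have hKP1 : ∀ i j, z i j (KP i j).1 (KP i j).2 = 1 := fun i j => (hslot i j).choose_spec.1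
  have hKP2 : ∀ i j (q : Fin 3 × Fin 2), q ≠ KP i j → z i j q.1 q.2 = 0 :=
    fun i j => (hslot i j).choose_spec.2
  have hval : ∀ i j k l, z i j k l = 1 → (k, l) = KP i j := by
    intro i j k l h1
    by_contra h
    rw [hKP2 i j (k, l) h] at h1
    norm_num at h1
  -- sign independence in j
  have col : ∀ i j, ∑ k, z i j k 0 = if (KP i j).2 = 0 then (1:ℝ) else 0 := by
    intro i j
    by_cases h2 : (KP i j).2 = 0
    · rw [if_pos h2]
      rw [Finset.sum_eq_single_of_mem (KP i j).1 (Finset.mem_univ _)]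
      · rw [show ((0:Fin 2) = (KP i j).2) from h2.symm]
        exact hKP1 i j
      · intro k _ hk
        apply hKP2 i j (k, 0)
        intro h
        exact hk (by rw [← h])
    · rw [if_neg h2]
      apply Finset.sum_eq_zero
      intro k _
      apply hKP2 i j (k, 0)
      intro h
      exact h2 (by rw [← h])
  have F1 : ∀ i j, (KP i j).2 = (KP i j₀).2 := by
    intro i j
    apply fin2_eq_of_iff
    have h := hii i j j₀
    rw [col, col] at h
    constructor <;> intro hh <;> by_contra hc <;> rw [if_pos hh] at h <;> simp [hc] at h
  -- place independence in i
  have rowk : ∀ i j k, z i j k 0 + z i j k 1 = if k = (KP i j).1 then (1:ℝ) else 0 := by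
    intro i j k
    by_cases h : k = (KP i j).1
    · rw [if_pos h]
      rcases fin2_cases (KP i j).2 with h2 | h2
      · rw [show z i j k 0 = 1 from by rw [h, ← h2]; exact hKP1 i j]
        rw [show z i j k 1 = 0 from hKP2 i j (k, 1) (by
          intro hc
          rw [← hc] at h2
          exact absurd (show (1:Fin 2) = 0 from h2) (by decide))]
        norm_num
      · rw [show z i j k 1 = 1 from by rw [h, ← h2]; exact hKP1 i j]
        rw [show z i j k 0 = 0 from hKP2 i j (k, 0) (by
          intro hc
          rw [← hc] at h2
          exact absurd (show (0:Fin 2) = 1 from h2) (by decide))]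
        norm_num
    · rw [if_neg h]
      rw [hKP2 i j (k, 0) (fun hc => h (by rw [← hc])),
        hKP2 i j (k, 1) (fun hc => h (by rw [← hc]))]
      norm_num
  have F2 : ∀ i i' j, (KP i j).1 = (KP i' j).1 := by
    intro i i' j
    have h := hiii (KP i j).1 j i i'
    rw [rowk, rowk, if_pos rfl] at h
    by_contra hc
    rw [if_neg (fun hh => hc hh)] at h
    exact one_ne_zero h
  -- the assignment
  set u : Fin m → Fin 2 := fun i => flipSign ((KP i j₀).2) with hudef
  have husign : ∀ i j, u i = flipSign ((KP i j).2) := by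
    intro i j
    rw [F1 i j]
  -- each clause term equals 1
  have hzLP : z ∈ SATPLP m n := ⟨hsum, hii, hiii, hnn⟩
  have hT : ∀ j q, z (C j q).1 j q (C j q).2
      + ∑ k ∈ Finset.univ.erase q, z (C j q).1 j k (flipSign (C j q).2) = 1 := by
    have hsum' : ∑ p : Fin n × Fin 3, (z (C p.1 p.2).1 p.1 p.2 (C p.1 p.2).2
        + ∑ k ∈ Finset.univ.erase p.2, z (C p.1 p.2).1 p.1 k (flipSign (C p.1 p.2).2))
        = (Fintype.card (Fin n × Fin 3) : ℝ) := by
      rw [Fintype.sum_prod_type, ← dotp_wVec C hdist z, hdz]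
      simp [Fintype.card_prod]
      ring
    have := all_eq_one _ (fun p : Fin n × Fin 3 => term_le_one hzLP _ _ _ _) hsum'
    intro j q
    exact this (j, q)
  -- characterization of true literals
  have hchar : ∀ j q, LitTrue u (C j q) ↔ (KP (C j q).1 j).1 = q := by
    intro j q
    by_cases h : z (C j q).1 j q (C j q).2 = 1
    · have hkp := hval _ _ _ _ h
      have h1 : (KP (C j q).1 j).1 = q := by rw [← hkp]
      have h2 : (KP (C j q).1 j).2 = (C j q).2 := by rw [← hkp]
      constructor
      · intro _; exact h1
      · intro _
        apply (litTrue_iff u _).mpr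
        rw [husign _ j, h2]
    · have h0 : z (C j q).1 j q (C j q).2 = 0 := (h01 _ _ _ _).resolve_right h
      have hrest : ∑ k ∈ Finset.univ.erase q, z (C j q).1 j k (flipSign (C j q).2) = 1 := by
        have := hT j q
        rw [h0, zero_add] at this
        exact this
      obtain ⟨k, hk, hkne⟩ := Finset.exists_ne_zero_of_sum_ne_zero
        (s := Finset.univ.erase q) (by rw [hrest]; exact one_ne_zero)
      have hk1 : z (C j q).1 j k (flipSign (C j q).2) = 1 := (h01 _ _ _ _).resolve_left hkne
      have hkp := hval _ _ _ _ hk1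
      have h1 : (KP (C j q).1 j).1 = k := by rw [← hkp]
      have h2 : (KP (C j q).1 j).2 = flipSign (C j q).2 := by rw [← hkp]
      have hkq : k ≠ q := (Finset.mem_erase.mp hk).1
      constructor
      · intro hlit
        exfalso
        have ha : u (C j q).1 = (C j q).2 := by rw [husign _ j, h2, flipSign_flip_flip]
        have hb := (litTrue_iff u _).mp hlit
        rw [hb] at ha
        exact flip_ne _ ha
      · intro hq
        exact absurd (h1 ▸ hq : k = q) hkq
  refine ⟨u, fun j => ?_⟩
  refine ⟨(KP (C j 0).1 j).1, (hchar j _).mpr (F2 _ _ j), ?_⟩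
  intro y hy
  calc y = (KP (C j y).1 j).1 := ((hchar j y).mp hy).symm
    _ = (KP (C j 0).1 j).1 := F2 _ _ j
/-- there is a truth assignment making exactly one literal true in every
clause iff the maximum of ⟨w,x⟩ over SATP_LP(m,n) equals 3n and the maximum of ⟨w,z⟩
over the integral points equals 3n. -/
theorem stmt4 (m n : ℕ) (C : Fin n → Clause m)
    (hdist : ∀ j, Function.Injective fun k => (C j k).1) :
    (∃ u : Fin m → Fin 2, ∀ j, ∃! k, LitTrue u (C j k)) ↔
      (IsGreatest (dotp (wVec C) '' SATPLP m n) (3 * (n : ℝ)) ∧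
       IsGreatest (dotp (wVec C) '' IntPts m n) (3 * (n : ℝ))) := by
  constructor
  · rintro ⟨u, hu⟩
    obtain ⟨z, hzI, hzd⟩ := forward C hdist u hu
    refine ⟨⟨⟨z, hzI.1, hzd⟩, ?_⟩, ⟨z, hzI, hzd⟩, ?_⟩
    · rintro y ⟨x, hx, rfl⟩
      exact dotp_le C hdist hx
    · rintro y ⟨x, hx, rfl⟩
      exact dotp_le C hdist hx.1
  · rintro ⟨-, ⟨z, hzI, hzd⟩, -⟩
    exact backward C hdist hzI hzd
end

section
/- Two distinct integral points u = z(r_u, c_u) and v = z(r_v, c_v) of SATP_LP(m,n) are adjacent as vertices of SATP(m,n) if and only if one of the following holds: (a) r_u ≠ r_v and c_u ≠ c_v; (b) c_u = c_v and r_u, r_v differ in exactly one coordinate; (c) r_u = r_v and c_u, c_v differ in exactly one coordinate. -/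
open Finset

/-- The 0-1 point z(r,c): coordinate (i,j,k,l) equals 1 iff k = c_j and l = r_i
(in the paper's 1-based notation, k = c_j + 1 and l = r_i + 1). -/
def zpt {m n : ℕ} (r : Fin m → Fin 2) (c : Fin n → Fin 3) : Pt m n :=
  fun i j k l => if k = c j ∧ l = r i then 1 else 0

/-- Two distinct integral points u, v of SATP_LP(m,n) are adjacent (as vertices of
SATP(m,n)) iff the segment [u,v] is disjoint from the convex hull of the remaining
integral points. -/
def IsAdjacent {m n : ℕ} (u v : Pt m n) : Prop :=
  u ∈ IntPts m n ∧ v ∈ IntPts m n ∧ u ≠ v ∧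
  segment ℝ u v ∩ convexHull ℝ (IntPts m n \ {u, v}) = ∅

/-! ### Auxiliary lemmas -/

lemma fin2cases : ∀ b : Fin 2, b = 0 ∨ b = 1 := by decide

lemma fin2resolve : ∀ a b c : Fin 2, a ≠ b → c ≠ b → a = c := by decide

lemma sum_ind (a : Fin 3 → Fin 2 → ℝ) (k₀ : Fin 3) (l₀ : Fin 2) :
    ∑ k, ∑ l, (if k = k₀ ∧ l = l₀ then a k l else 0) = a k₀ l₀ := by
  simp [ite_and, Finset.sum_ite_eq']

lemma zpt_mem {m n : ℕ} (r : Fin m → Fin 2) (c : Fin n → Fin 3) :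
    zpt r c ∈ IntPts m n := by
  refine ⟨⟨fun i j => ?_, fun i j t => ?_, fun k j i s => ?_, fun i j k l => ?_⟩,
    fun i j k l => ?_⟩
  · exact sum_ind (fun _ _ => (1:ℝ)) (c j) (r i)
  · have h : ∀ (t : Fin n), ∑ k, zpt r c i t k 0 = if (0 : Fin 2) = r i then 1 else 0 := by
      intro t
      unfold zpt
      simp [ite_and, Finset.sum_ite_eq']
    rw [h j, h t]
  · have h : ∀ (i : Fin m), zpt r c i j k 0 + zpt r c i j k 1 = if k = c j then 1 else 0 := by
      intro i
      unfold zpt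
      rcases fin2cases (r i) with h0 | h0 <;> simp [h0, ite_and]
    rw [h i, h s]
  · unfold zpt; positivity
  · unfold zpt
    by_cases h : k = c j ∧ l = r i <;> simp [h]

lemma zpt_inj {m n : ℕ} (hm : 0 < m) (hn : 0 < n) {r r' : Fin m → Fin 2}
    {c c' : Fin n → Fin 3} (h : zpt r c = zpt r' c') : r = r' ∧ c = c' := by
  constructor
  · funext i
    by_contra hne
    have := congrFun (congrFun (congrFun (congrFun h i) ⟨0, hn⟩) (c ⟨0, hn⟩)) (r i)
    simp [zpt, hne] at this
  · funext j
    by_contra hne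
    have := congrFun (congrFun (congrFun (congrFun h ⟨0, hm⟩) j) (c j)) (r ⟨0, hm⟩)
    simp [zpt, hne] at this

lemma intPts_eq_zpt {m n : ℕ} (hm : 0 < m) (hn : 0 < n) {x : Pt m n} (hx : x ∈ IntPts m n) :
    ∃ r c, x = zpt r c := by
  obtain ⟨⟨hsum, hrow, hcol, hnonneg⟩, h01⟩ := hx
  have hex : ∀ i j, ∃ k l, x i j k l = 1 := by
    intro i j
    by_contra hno
    push_neg at hno
    have hz : ∀ k l, x i j k l = 0 := fun k l => (h01 i j k l).resolve_right (hno k l)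
    have := hsum i j
    simp [hz] at this
  choose K L hKL using hex
  have huniq : ∀ i j k l, x i j k l = 1 → k = K i j ∧ l = L i j := by
    intro i j k l h1
    by_contra hc
    have hpairne : ((k,l) : Fin 3 × Fin 2) ≠ (K i j, L i j) := by
      intro he
      exact hc ⟨congrArg Prod.fst he, congrArg Prod.snd he⟩
    have hb : (2:ℝ) ≤ ∑ p : Fin 3 × Fin 2, x i j p.1 p.2 := by
      have h2 := Finset.sum_le_sum_of_subset_of_nonneg
        (Finset.subset_univ ({(k,l),(K i j, L i j)} : Finset (Fin 3 × Fin 2)))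
        (fun p _ _ => hnonneg i j p.1 p.2)
      rw [Finset.sum_pair hpairne, h1, hKL i j] at h2
      linarith
    have h3 : ∑ p : Fin 3 × Fin 2, x i j p.1 p.2 = 1 := by
      rw [Fintype.sum_prod_type]; exact hsum i j
    linarith
  have hz : ∀ i j k l, ¬(k = K i j ∧ l = L i j) → x i j k l = 0 := by
    intro i j k l hc
    rcases h01 i j k l with h | h
    · exact h
    · exact absurd (huniq i j k l h) hc
  have hS : ∀ i j, ∑ k, x i j k 0 = if L i j = 0 then 1 else 0 := by
    intro i j
    by_cases hL : L i j = 0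
    · rw [if_pos hL]
      have : ∀ k : Fin 3, x i j k 0 = if k = K i j then 1 else 0 := by
        intro k
        by_cases hk : k = K i j
        · rw [if_pos hk, hk, ← hL]; exact hKL i j
        · rw [if_neg hk]; exact hz i j k 0 (fun hc => hk hc.1)
      rw [Finset.sum_congr rfl (fun k _ => this k)]
      simp
    · rw [if_neg hL]
      have : ∀ k : Fin 3, x i j k 0 = 0 := by
        intro k
        exact hz i j k 0 (fun hc => hL hc.2.symm)
      rw [Finset.sum_congr rfl (fun k _ => this k)]
      simp
  have hLconst : ∀ i j t, L i j = L i t := by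
    intro i j t
    have h1 := hrow i j t
    rw [hS i j, hS i t] at h1
    rcases fin2cases (L i j) with ha | ha <;> rcases fin2cases (L i t) with hb | hb <;>
      simp [ha, hb] at h1 ⊢
  have hQ : ∀ i j k, x i j k 0 + x i j k 1 = if k = K i j then 1 else 0 := by
    intro i j k
    by_cases hk : k = K i j
    · rw [if_pos hk, hk]
      rcases fin2cases (L i j) with hL | hL
      · rw [← hL, hKL i j,
          hz i j (K i j) 1 (fun hc => by rw [hL] at hc; exact absurd hc.2 (by decide))]
        ring
      · rw [← hL, hKL i j,
          hz i j (K i j) 0 (fun hc => by rw [hL] at hc; exact absurd hc.2 (by decide))]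
        ring
    · rw [if_neg hk, hz i j k 0 (fun hc => hk hc.1), hz i j k 1 (fun hc => hk hc.1)]
      ring
  have hKconst : ∀ i s j, K i j = K s j := by
    intro i s j
    have h1 := hcol (K i j) j i s
    rw [hQ i j (K i j), hQ s j (K i j), if_pos rfl] at h1
    by_contra hc
    rw [if_neg hc] at h1
    norm_num at h1
  refine ⟨fun i => L i ⟨0, hn⟩, fun j => K ⟨0, hm⟩ j, ?_⟩
  funext i j k l
  have hK : K i j = K ⟨0, hm⟩ j := hKconst i ⟨0, hm⟩ j
  have hL : L i j = L i ⟨0, hn⟩ := hLconst i j ⟨0, hn⟩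
  by_cases h : k = K ⟨0, hm⟩ j ∧ l = L i ⟨0, hn⟩
  · rw [show zpt (fun i => L i ⟨0, hn⟩) (fun j => K ⟨0, hm⟩ j) i j k l = 1 from if_pos h]
    rw [h.1, h.2, ← hK, ← hL]
    exact hKL i j
  · rw [show zpt (fun i => L i ⟨0, hn⟩) (fun j => K ⟨0, hm⟩ j) i j k l = 0 from if_neg h]
    exact hz i j k l (fun hc => h ⟨hc.1.trans hK, hc.2.trans hL⟩)

/-! ### Linear functionals -/

def lf {m n : ℕ} (a x : Pt m n) : ℝ := ∑ i, ∑ j, ∑ k, ∑ l, a i j k l * x i j k l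

lemma lf_zpt {m n : ℕ} (a : Pt m n) (r : Fin m → Fin 2) (c : Fin n → Fin 3) :
    lf a (zpt r c) = ∑ i, ∑ j, a i j (c j) (r i) := by
  unfold lf zpt
  simp only [mul_ite, mul_one, mul_zero]
  exact Finset.sum_congr rfl fun i _ => Finset.sum_congr rfl fun j _ => sum_ind _ _ _

lemma lf_linear {m n : ℕ} (a : Pt m n) : IsLinearMap ℝ (lf a) := by
  constructor
  · intro x y
    unfold lf
    simp only [Pi.add_apply, mul_add]
    simp [Finset.sum_add_distrib]
  · intro s x
    unfold lf
    simp only [Pi.smul_apply, smul_eq_mul]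
    rw [Finset.mul_sum]
    refine Finset.sum_congr rfl fun i _ => ?_
    rw [Finset.mul_sum]
    refine Finset.sum_congr rfl fun j _ => ?_
    rw [Finset.mul_sum]
    refine Finset.sum_congr rfl fun k _ => ?_
    rw [Finset.mul_sum]
    refine Finset.sum_congr rfl fun l _ => ?_
    ring

lemma adj_of_functional {m n : ℕ} {u v : Pt m n} (a : Pt m n)
    (hu : u ∈ IntPts m n) (hv : v ∈ IntPts m n) (huv : u ≠ v)
    (hfv : lf a v = lf a u)
    (hmax : ∀ w ∈ IntPts m n, w ≠ u → w ≠ v → lf a w < lf a u) :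
    IsAdjacent u v := by
  refine ⟨hu, hv, huv, ?_⟩
  rw [Set.eq_empty_iff_forall_notMem]
  rintro p ⟨hp1, hp2⟩
  obtain ⟨s, t, hs, ht, hst, hp⟩ := hp1
  have hlin := lf_linear a
  have hfp : lf a p = lf a u := by
    rw [← hp, hlin.map_add, hlin.map_smul, hlin.map_smul, hfv, smul_eq_mul, smul_eq_mul]
    linear_combination (lf a u) * hst
  have hhalf : convexHull ℝ (IntPts m n \ {u, v}) ⊆ {x | lf a x < lf a u} := by
    apply convexHull_min
    · rintro w ⟨hw1, hw2⟩
      simp only [Set.mem_insert_iff, Set.mem_singleton_iff, not_or] at hw2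
      exact hmax w hw1 hw2.1 hw2.2
    · exact convex_halfSpace_lt hlin _
  have := hhalf hp2
  rw [Set.mem_setOf_eq, hfp] at this
  exact lt_irrefl _ this

/-! ### Counting lemmas -/

lemma sum_ind_prod {m n : ℕ} (P : Fin n → Prop) (Q : Fin m → Prop)
    [DecidablePred P] [DecidablePred Q] :
    ∑ i : Fin m, ∑ j : Fin n, (if P j ∧ Q i then (1:ℝ) else 0)
      = ((univ.filter Q).card : ℝ) * ((univ.filter P).card : ℝ) := by
  have h1 : ∀ i, (∑ j, if P j ∧ Q i then (1:ℝ) else 0)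
      = (if Q i then (1:ℝ) else 0) * ∑ j, (if P j then (1:ℝ) else 0) := by
    intro i; by_cases h : Q i <;> simp [h]
  simp_rw [h1]
  rw [← Finset.sum_mul, Finset.sum_boole, Finset.sum_boole]

lemma filter_card_eq_iff {N : ℕ} (P : Fin N → Prop) [DecidablePred P] :
    (univ.filter P).card = N ↔ ∀ j, P j := by
  constructor
  · intro h j
    have h2 : univ.filter P = univ := Finset.eq_univ_of_card _ (by simpa using h)
    have := Finset.mem_univ j
    rw [← h2, Finset.mem_filter] at this
    exact this.2
  · intro h
    rw [Finset.filter_true_of_mem (fun x _ => h x)]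
    simp

lemma filter_card_le {N : ℕ} (P : Fin N → Prop) [DecidablePred P] :
    (univ.filter P).card ≤ N := le_trans (Finset.card_filter_le _ _) (by simp)

lemma filter_card_lt {N : ℕ} (P : Fin N → Prop) [DecidablePred P] {j : Fin N} (hj : ¬P j) :
    (univ.filter P).card < N :=
  lt_of_le_of_ne (filter_card_le P) (fun h => hj ((filter_card_eq_iff P).mp h j))

lemma filter_card_add_le {N : ℕ} (P Q R : Fin N → Prop)
    [DecidablePred P] [DecidablePred Q] [DecidablePred R]
    (h : ∀ j, P j → Q j → R j) :
    (univ.filter P).card + (univ.filter Q).card ≤ N + (univ.filter R).card := by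
  have key : ∀ j : Fin N,
      ((if P j then 1 else 0) + (if Q j then 1 else 0) : ℕ) ≤ 1 + (if R j then 1 else 0) := by
    intro j
    by_cases hp : P j <;> by_cases hq : Q j
    · simp [hp, hq, h j hp hq]
    · simp [hp, hq]
    · simp [hp, hq]
    · simp [hp, hq]
  calc (univ.filter P).card + (univ.filter Q).card
      = ∑ j : Fin N, ((if P j then 1 else 0) + (if Q j then 1 else 0)) := by
        rw [Finset.sum_add_distrib, Finset.card_filter, Finset.card_filter]
    _ ≤ ∑ j : Fin N, (1 + if R j then 1 else 0) := Finset.sum_le_sum (fun j _ => key j)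
    _ = N + (univ.filter R).card := by
        rw [Finset.sum_add_distrib, Finset.card_filter]; simp

lemma filter_eq_and_card {N : ℕ} (j0 : Fin N) (Pr : Fin N → Prop) [DecidablePred Pr] :
    (univ.filter fun j => j = j0 ∧ Pr j).card = if Pr j0 then 1 else 0 := by
  by_cases h : Pr j0
  · rw [if_pos h]
    have he : (univ.filter fun j => j = j0 ∧ Pr j) = {j0} := by
      ext x
      simp only [Finset.mem_filter, Finset.mem_univ, true_and, Finset.mem_singleton]
      constructor
      · rintro ⟨h1, -⟩; exact h1
      · rintro rfl; exact ⟨rfl, h⟩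
    rw [he]; simp
  · rw [if_neg h, Finset.card_eq_zero, Finset.filter_eq_empty_iff]
    rintro x - ⟨rfl, hp⟩
    exact h hp

lemma core_a (n m dc ec A B C D : ℕ) (hA : A ≤ n) (hB : B ≤ n) (hC : C ≤ m) (hD : D ≤ m)
    (hAB : A + B ≤ n + dc) (hCD : C + D ≤ m + ec) (hdc : dc < n) (hec : ec < m)
    (h1 : A < n ∨ C < m) (h2 : B < n ∨ D < m) :
    A * C + B * D < n * m + dc * ec := by
  zify at *
  rcases le_total (D : ℤ) C with hDC | hDC
  · have e1 : (0:ℤ) ≤ ((n:ℤ) + dc - A - B) * D := mul_nonneg (by linarith) (by positivity)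
    have e3 : (0:ℤ) ≤ (dc:ℤ) * ((m:ℤ) + ec - C - D) := mul_nonneg (by positivity) (by linarith)
    by_cases hCm : (C:ℤ) = m
    · have hAn : (A:ℤ) < n := by
        rcases h1 with h | h
        · exact h
        · omega
      have e2 : (1:ℤ) ≤ ((n:ℤ) - A) * ((C:ℤ) - D) := by
        have := mul_le_mul (by omega : (1:ℤ) ≤ (n:ℤ) - A) (by omega : (1:ℤ) ≤ (C:ℤ) - D)
          (by norm_num) (by omega)
        linarith
      have e4 : (0:ℤ) ≤ ((n:ℤ) - dc) * ((m:ℤ) - C) := mul_nonneg (by omega) (by omega)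
      nlinarith [e1, e2, e3, e4]
    · have e2 : (0:ℤ) ≤ ((n:ℤ) - A) * ((C:ℤ) - D) := mul_nonneg (by omega) (by omega)
      have e4 : (1:ℤ) ≤ ((n:ℤ) - dc) * ((m:ℤ) - C) := by
        have := mul_le_mul (by omega : (1:ℤ) ≤ (n:ℤ) - dc) (by omega : (1:ℤ) ≤ (m:ℤ) - C)
          (by norm_num) (by omega)
        linarith
      nlinarith [e1, e2, e3, e4]
  · have e1 : (0:ℤ) ≤ ((n:ℤ) + dc - A - B) * C := mul_nonneg (by linarith) (by positivity)
    have e3 : (0:ℤ) ≤ (dc:ℤ) * ((m:ℤ) + ec - C - D) := mul_nonneg (by positivity) (by linarith)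
    by_cases hDm : (D:ℤ) = m
    · have hBn : (B:ℤ) < n := by
        rcases h2 with h | h
        · exact h
        · omega
      have e2 : (1:ℤ) ≤ ((n:ℤ) - B) * ((D:ℤ) - C) := by
        have := mul_le_mul (by omega : (1:ℤ) ≤ (n:ℤ) - B) (by omega : (1:ℤ) ≤ (D:ℤ) - C)
          (by norm_num) (by omega)
        linarith
      have e4 : (0:ℤ) ≤ ((n:ℤ) - dc) * ((m:ℤ) - D) := mul_nonneg (by omega) (by omega)
      nlinarith [e1, e2, e3, e4]
    · have e2 : (0:ℤ) ≤ ((n:ℤ) - B) * ((D:ℤ) - C) := mul_nonneg (by omega) (by omega)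
      have e4 : (1:ℤ) ≤ ((n:ℤ) - dc) * ((m:ℤ) - D) := by
        have := mul_le_mul (by omega : (1:ℤ) ≤ (n:ℤ) - dc) (by omega : (1:ℤ) ≤ (m:ℤ) - D)
          (by norm_num) (by omega)
        linarith
      nlinarith [e1, e2, e3, e4]

/-! ### Non-adjacency constructions -/

lemma not_adj_cols {m n : ℕ} (hm : 0 < m) (hn : 0 < n) (r : Fin m → Fin 2)
    (cu cv : Fin n → Fin 3) (j1 j2 : Fin n) (h12 : j1 ≠ j2)
    (h1 : cu j1 ≠ cv j1) (h2 : cu j2 ≠ cv j2) :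
    ¬ IsAdjacent (zpt r cu) (zpt r cv) := by
  rintro ⟨-, -, -, hempty⟩
  set c1 := Function.update cu j1 (cv j1) with hc1
  set c2 := Function.update cv j1 (cu j1) with hc2
  have hkey : (1/2 : ℝ) • zpt r cu + (1/2 : ℝ) • zpt r cv
      = (1/2 : ℝ) • zpt r c1 + (1/2 : ℝ) • zpt r c2 := by
    funext i j k l
    simp only [Pi.add_apply, Pi.smul_apply, smul_eq_mul]
    by_cases hj : j = j1
    · subst hj
      simp only [zpt, hc1, hc2, Function.update_self]
      ring
    · simp only [zpt, hc1, hc2, Function.update_of_ne hj]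
  have hz1u : zpt r c1 ≠ zpt r cu := by
    intro h
    have := (zpt_inj hm hn h).2
    have := congrFun this j1
    rw [hc1, Function.update_self] at this
    exact h1 this.symm
  have hz1v : zpt r c1 ≠ zpt r cv := by
    intro h
    have := (zpt_inj hm hn h).2
    have := congrFun this j2
    rw [hc1, Function.update_of_ne (Ne.symm h12)] at this
    exact h2 this
  have hz2u : zpt r c2 ≠ zpt r cu := by
    intro h
    have := (zpt_inj hm hn h).2
    have := congrFun this j2
    rw [hc2, Function.update_of_ne (Ne.symm h12)] at this
    exact h2 this.symm
  have hz2v : zpt r c2 ≠ zpt r cv := by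
    intro h
    have := (zpt_inj hm hn h).2
    have := congrFun this j1
    rw [hc2, Function.update_self] at this
    exact h1 this
  have hz1S : zpt r c1 ∈ IntPts m n \ {zpt r cu, zpt r cv} := by
    refine ⟨zpt_mem _ _, ?_⟩
    simp only [Set.mem_insert_iff, Set.mem_singleton_iff, not_or]
    exact ⟨hz1u, hz1v⟩
  have hz2S : zpt r c2 ∈ IntPts m n \ {zpt r cu, zpt r cv} := by
    refine ⟨zpt_mem _ _, ?_⟩
    simp only [Set.mem_insert_iff, Set.mem_singleton_iff, not_or]
    exact ⟨hz2u, hz2v⟩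
  have hmem1 : (1/2 : ℝ) • zpt r cu + (1/2 : ℝ) • zpt r cv ∈ segment ℝ (zpt r cu) (zpt r cv) :=
    ⟨1/2, 1/2, by norm_num, by norm_num, by norm_num, rfl⟩
  have hmem2 : (1/2 : ℝ) • zpt r cu + (1/2 : ℝ) • zpt r cv
      ∈ convexHull ℝ (IntPts m n \ {zpt r cu, zpt r cv}) := by
    rw [hkey]
    exact (convex_convexHull ℝ _) (subset_convexHull ℝ _ hz1S) (subset_convexHull ℝ _ hz2S)
      (by norm_num) (by norm_num) (by norm_num)
  have : (1/2 : ℝ) • zpt r cu + (1/2 : ℝ) • zpt r cv ∈ (∅ : Set (Pt m n)) := by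
    rw [← hempty]; exact ⟨hmem1, hmem2⟩
  exact this

lemma not_adj_rows {m n : ℕ} (hm : 0 < m) (hn : 0 < n) (c : Fin n → Fin 3)
    (ru rv : Fin m → Fin 2) (i1 i2 : Fin m) (h12 : i1 ≠ i2)
    (h1 : ru i1 ≠ rv i1) (h2 : ru i2 ≠ rv i2) :
    ¬ IsAdjacent (zpt ru c) (zpt rv c) := by
  rintro ⟨-, -, -, hempty⟩
  set r1 := Function.update ru i1 (rv i1) with hr1
  set r2 := Function.update rv i1 (ru i1) with hr2
  have hkey : (1/2 : ℝ) • zpt ru c + (1/2 : ℝ) • zpt rv c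
      = (1/2 : ℝ) • zpt r1 c + (1/2 : ℝ) • zpt r2 c := by
    funext i j k l
    simp only [Pi.add_apply, Pi.smul_apply, smul_eq_mul]
    by_cases hi : i = i1
    · subst hi
      simp only [zpt, hr1, hr2, Function.update_self]
      ring
    · simp only [zpt, hr1, hr2, Function.update_of_ne hi]
  have hz1u : zpt r1 c ≠ zpt ru c := by
    intro h
    have := (zpt_inj hm hn h).1
    have := congrFun this i1
    rw [hr1, Function.update_self] at this
    exact h1 this.symm
  have hz1v : zpt r1 c ≠ zpt rv c := by
    intro h
    have := (zpt_inj hm hn h).1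
    have := congrFun this i2
    rw [hr1, Function.update_of_ne (Ne.symm h12)] at this
    exact h2 this
  have hz2u : zpt r2 c ≠ zpt ru c := by
    intro h
    have := (zpt_inj hm hn h).1
    have := congrFun this i2
    rw [hr2, Function.update_of_ne (Ne.symm h12)] at this
    exact h2 this.symm
  have hz2v : zpt r2 c ≠ zpt rv c := by
    intro h
    have := (zpt_inj hm hn h).1
    have := congrFun this i1
    rw [hr2, Function.update_self] at this
    exact h1 this
  have hz1S : zpt r1 c ∈ IntPts m n \ {zpt ru c, zpt rv c} := by
    refine ⟨zpt_mem _ _, ?_⟩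
    simp only [Set.mem_insert_iff, Set.mem_singleton_iff, not_or]
    exact ⟨hz1u, hz1v⟩
  have hz2S : zpt r2 c ∈ IntPts m n \ {zpt ru c, zpt rv c} := by
    refine ⟨zpt_mem _ _, ?_⟩
    simp only [Set.mem_insert_iff, Set.mem_singleton_iff, not_or]
    exact ⟨hz2u, hz2v⟩
  have hmem1 : (1/2 : ℝ) • zpt ru c + (1/2 : ℝ) • zpt rv c ∈ segment ℝ (zpt ru c) (zpt rv c) :=
    ⟨1/2, 1/2, by norm_num, by norm_num, by norm_num, rfl⟩
  have hmem2 : (1/2 : ℝ) • zpt ru c + (1/2 : ℝ) • zpt rv c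
      ∈ convexHull ℝ (IntPts m n \ {zpt ru c, zpt rv c}) := by
    rw [hkey]
    exact (convex_convexHull ℝ _) (subset_convexHull ℝ _ hz1S) (subset_convexHull ℝ _ hz2S)
      (by norm_num) (by norm_num) (by norm_num)
  have : (1/2 : ℝ) • zpt ru c + (1/2 : ℝ) • zpt rv c ∈ (∅ : Set (Pt m n)) := by
    rw [← hempty]; exact ⟨hmem1, hmem2⟩
  exact this

/-! ### Sufficiency: case (a) -/

lemma adj_case_a {m n : ℕ} (hm : 0 < m) (hn : 0 < n) (ru rv : Fin m → Fin 2)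
    (cu cv : Fin n → Fin 3) (hne : (zpt ru cu : Pt m n) ≠ zpt rv cv)
    (hr : ru ≠ rv) (hc : cu ≠ cv) : IsAdjacent (zpt ru cu) (zpt rv cv) := by
  set a : Pt m n := fun i j k l =>
    (if k = cu j ∧ l = ru i then (1:ℝ) else 0) + (if k = cv j ∧ l = rv i then 1 else 0) with ha
  have heval : ∀ (r' : Fin m → Fin 2) (c' : Fin n → Fin 3),
      lf a (zpt r' c') =
        ((univ.filter fun i => r' i = ru i).card : ℝ) *
          ((univ.filter fun j => c' j = cu j).card : ℝ)
      + ((univ.filter fun i => r' i = rv i).card : ℝ) *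
          ((univ.filter fun j => c' j = cv j).card : ℝ) := by
    intro r' c'
    rw [lf_zpt, ← sum_ind_prod (fun j => c' j = cu j) (fun i => r' i = ru i),
        ← sum_ind_prod (fun j => c' j = cv j) (fun i => r' i = rv i),
        ← Finset.sum_add_distrib]
    refine Finset.sum_congr rfl fun i _ => ?_
    rw [← Finset.sum_add_distrib]
  have hmcard : ((univ.filter fun i : Fin m => ru i = ru i).card : ℝ) = m := by simp
  have hncard : ((univ.filter fun j : Fin n => cu j = cu j).card : ℝ) = n := by simp
  have hU : lf a (zpt ru cu) = (m : ℝ) * n +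
      ((univ.filter fun i => ru i = rv i).card : ℝ) *
        ((univ.filter fun j => cu j = cv j).card : ℝ) := by
    rw [heval, hmcard, hncard]
  have hflipr : (univ.filter fun i => rv i = ru i) = (univ.filter fun i => ru i = rv i) := by
    ext x; simp only [Finset.mem_filter, Finset.mem_univ, true_and]; exact eq_comm
  have hflipc : (univ.filter fun j => cv j = cu j) = (univ.filter fun j => cu j = cv j) := by
    ext x; simp only [Finset.mem_filter, Finset.mem_univ, true_and]; exact eq_comm
  have hV : lf a (zpt rv cv) = lf a (zpt ru cu) := by
    rw [heval, hU, hflipr, hflipc]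
    have h1 : ((univ.filter fun i : Fin m => rv i = rv i).card : ℝ) = m := by simp
    have h2 : ((univ.filter fun j : Fin n => cv j = cv j).card : ℝ) = n := by simp
    rw [h1, h2]
    ring
  refine adj_of_functional a (zpt_mem _ _) (zpt_mem _ _) hne hV ?_
  intro w hw hwu hwv
  obtain ⟨r', c', rfl⟩ := intPts_eq_zpt hm hn hw
  rw [heval, hU]
  obtain ⟨jd, hjd⟩ := Function.ne_iff.mp hc
  obtain ⟨id, hid⟩ := Function.ne_iff.mp hr
  have hdc : (univ.filter fun j => cu j = cv j).card < n := filter_card_lt (P := fun j => cu j = cv j) hjd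
  have hec : (univ.filter fun i => ru i = rv i).card < m := filter_card_lt (P := fun i => ru i = rv i) hid
  have hAB : (univ.filter fun j => c' j = cu j).card + (univ.filter fun j => c' j = cv j).card
      ≤ n + (univ.filter fun j => cu j = cv j).card :=
    filter_card_add_le _ _ _ (fun j h1 h2 => h1.symm.trans h2)
  have hCD : (univ.filter fun i => r' i = ru i).card + (univ.filter fun i => r' i = rv i).card
      ≤ m + (univ.filter fun i => ru i = rv i).card :=
    filter_card_add_le _ _ _ (fun i h1 h2 => h1.symm.trans h2)
  have h1 : (univ.filter fun j => c' j = cu j).card < n ∨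
      (univ.filter fun i => r' i = ru i).card < m := by
    have hne1 : ¬(c' = cu ∧ r' = ru) := fun ⟨e1, e2⟩ => hwu (by rw [e1, e2])
    rcases not_and_or.mp hne1 with h | h
    · left; obtain ⟨j, hj⟩ := Function.ne_iff.mp h
      exact filter_card_lt (P := fun j => _ = _) hj
    · right; obtain ⟨i, hi⟩ := Function.ne_iff.mp h
      exact filter_card_lt (P := fun i => _ = _) hi
  have h2 : (univ.filter fun j => c' j = cv j).card < n ∨
      (univ.filter fun i => r' i = rv i).card < m := by
    have hne2 : ¬(c' = cv ∧ r' = rv) := fun ⟨e1, e2⟩ => hwv (by rw [e1, e2])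
    rcases not_and_or.mp hne2 with h | h
    · left; obtain ⟨j, hj⟩ := Function.ne_iff.mp h
      exact filter_card_lt (P := fun j => _ = _) hj
    · right; obtain ⟨i, hi⟩ := Function.ne_iff.mp h
      exact filter_card_lt (P := fun i => _ = _) hi
  have key := core_a n m _ _ _ _ _ _ (filter_card_le _) (filter_card_le _)
    (filter_card_le _) (filter_card_le _) hAB hCD hdc hec h1 h2
  have key' : ((univ.filter fun j => c' j = cu j).card * (univ.filter fun i => r' i = ru i).card
      + (univ.filter fun j => c' j = cv j).card * (univ.filter fun i => r' i = rv i).card : ℝ)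
      < (n * m + (univ.filter fun j => cu j = cv j).card *
          (univ.filter fun i => ru i = rv i).card : ℝ) := by exact_mod_cast key
  push_cast at key' ⊢
  nlinarith [key']

/-! ### Sufficiency: case (b) -/

lemma adj_case_b {m n : ℕ} (hm : 0 < m) (hn : 0 < n) (ru rv : Fin m → Fin 2)
    (c : Fin n → Fin 3) (hne : (zpt ru c : Pt m n) ≠ zpt rv c)
    (i0 : Fin m) (hi0 : ru i0 ≠ rv i0) (hoff : ∀ i, i ≠ i0 → ru i = rv i) :
    IsAdjacent (zpt ru c) (zpt rv c) := by
  set a : Pt m n := fun i j k l =>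
    (if k = c j ∧ (l = ru i ∧ i ≠ i0) then (1:ℝ) else 0)
    + (if k = c j ∧ i = i0 then 1 else 0) with ha
  have heval : ∀ (r' : Fin m → Fin 2) (c' : Fin n → Fin 3), lf a (zpt r' c') =
      ((univ.filter fun i => r' i = ru i ∧ i ≠ i0).card : ℝ) *
        ((univ.filter fun j => c' j = c j).card : ℝ)
    + ((univ.filter fun i : Fin m => i = i0).card : ℝ) *
        ((univ.filter fun j => c' j = c j).card : ℝ) := by
    intro r' c'
    rw [lf_zpt, ← sum_ind_prod (fun j => c' j = c j) (fun i => r' i = ru i ∧ i ≠ i0),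
        ← sum_ind_prod (fun j => c' j = c j) (fun i => i = i0),
        ← Finset.sum_add_distrib]
    refine Finset.sum_congr rfl fun i _ => ?_
    rw [← Finset.sum_add_distrib]
  have hIr : ((univ.filter fun i : Fin m => i = i0).card : ℝ) = 1 := by
    rw [Finset.filter_eq']
    simp
  have hNr : ((univ.filter fun j : Fin n => c j = c j).card : ℝ) = n := by simp
  have hEfilt : (univ.filter fun i : Fin m => ru i = ru i ∧ i ≠ i0)
      = univ.filter (fun i => i ≠ i0) := by
    ext x; simp
  have hEfiltv : (univ.filter fun i : Fin m => rv i = ru i ∧ i ≠ i0)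
      = univ.filter (fun i => i ≠ i0) := by
    ext x
    simp only [Finset.mem_filter, Finset.mem_univ, true_and]
    constructor
    · rintro ⟨-, h⟩; exact h
    · intro h; exact ⟨(hoff x h).symm, h⟩
  have hE1 : (univ.filter fun i : Fin m => i ≠ i0).card + 1 = m := by
    rw [Finset.filter_ne', Finset.card_erase_add_one (Finset.mem_univ i0)]
    simp
  have hU : lf a (zpt ru c) =
      ((univ.filter fun i : Fin m => i ≠ i0).card : ℝ) * n + 1 * n := by
    rw [heval, hIr, hNr, hEfilt]
  have hV : lf a (zpt rv c) = lf a (zpt ru c) := by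
    rw [heval, hU, hIr, hNr, hEfiltv]
  refine adj_of_functional a (zpt_mem _ _) (zpt_mem _ _) hne hV ?_
  intro w hw hwu hwv
  obtain ⟨r', c', rfl⟩ := intPts_eq_zpt hm hn hw
  rw [heval, hU, hIr]
  have hSle : (univ.filter fun i => r' i = ru i ∧ i ≠ i0).card
      ≤ (univ.filter fun i : Fin m => i ≠ i0).card := by
    apply Finset.card_le_card
    intro x hx
    simp only [Finset.mem_filter, Finset.mem_univ, true_and] at *
    exact hx.2
  have hDle : (univ.filter fun j => c' j = c j).card ≤ n := filter_card_le _
  have key : (univ.filter fun i => r' i = ru i ∧ i ≠ i0).card *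
        (univ.filter fun j => c' j = c j).card + (univ.filter fun j => c' j = c j).card
      < (univ.filter fun i : Fin m => i ≠ i0).card * n + n := by
    by_cases hDn : (univ.filter fun j => c' j = c j).card = n
    · have hc' : c' = c := funext ((filter_card_eq_iff _).mp hDn)
      have hr'u : r' ≠ ru := fun h => hwu (by rw [h, hc'])
      have hr'v : r' ≠ rv := fun h => hwv (by rw [h, hc'])
      have hex : ∃ i1, i1 ≠ i0 ∧ r' i1 ≠ ru i1 := by
        by_contra hno
        push_neg at hno
        by_cases h0 : r' i0 = ru i0
        · refine hr'u (funext fun i => ?_)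
          by_cases hi : i = i0
          · rw [hi]; exact h0
          · exact hno i hi
        · have h0v : r' i0 = rv i0 := fin2resolve _ _ _ h0 (Ne.symm hi0)
          refine hr'v (funext fun i => ?_)
          by_cases hi : i = i0
          · rw [hi]; exact h0v
          · rw [hno i hi]; exact hoff i hi
      obtain ⟨i1, hi1, hri1⟩ := hex
      have hSE : (univ.filter fun i => r' i = ru i ∧ i ≠ i0).card
          < (univ.filter fun i : Fin m => i ≠ i0).card := by
        refine Finset.card_lt_card ?_
        refine (Finset.ssubset_iff_of_subset ?_).mpr ⟨i1, ?_, ?_⟩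
        · intro x hx
          simp only [Finset.mem_filter, Finset.mem_univ, true_and] at *
          exact hx.2
        · simp [hi1]
        · simp [hri1]
      rw [hDn]
      exact Nat.add_lt_add_right (Nat.mul_lt_mul_of_pos_right hSE hn) n
    · have hDlt : (univ.filter fun j => c' j = c j).card < n := lt_of_le_of_ne hDle hDn
      zify
      have hSle' : ((univ.filter fun i => r' i = ru i ∧ i ≠ i0).card : ℤ)
          ≤ ((univ.filter fun i : Fin m => i ≠ i0).card : ℤ) := by exact_mod_cast hSle
      have hDlt' : ((univ.filter fun j => c' j = c j).card : ℤ) < (n : ℤ) := by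
        exact_mod_cast hDlt
      nlinarith [mul_nonneg (by linarith : (0:ℤ) ≤
          ((univ.filter fun i : Fin m => i ≠ i0).card : ℤ)
          - ((univ.filter fun i => r' i = ru i ∧ i ≠ i0).card : ℤ))
          (by positivity : (0:ℤ) ≤ ((univ.filter fun j => c' j = c j).card : ℤ)),
        mul_le_mul (by omega : (1:ℤ) ≤
            ((univ.filter fun i => r' i = ru i ∧ i ≠ i0).card : ℤ) + 1)
          (by linarith : (1:ℤ) ≤ (n:ℤ) - ((univ.filter fun j => c' j = c j).card : ℤ))
          (by norm_num) (by positivity)]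
  have keyR : ((univ.filter fun i => r' i = ru i ∧ i ≠ i0).card *
        (univ.filter fun j => c' j = c j).card + (univ.filter fun j => c' j = c j).card : ℝ)
      < ((univ.filter fun i : Fin m => i ≠ i0).card * n + n : ℝ) := by exact_mod_cast key
  push_cast at keyR ⊢
  nlinarith [keyR]

/-! ### Sufficiency: case (c) -/

lemma adj_case_c {m n : ℕ} (hm : 0 < m) (hn : 0 < n) (r : Fin m → Fin 2)
    (cu cv : Fin n → Fin 3) (hne : (zpt r cu : Pt m n) ≠ zpt r cv)
    (j0 : Fin n) (hj0 : cu j0 ≠ cv j0) (hoff : ∀ j, j ≠ j0 → cu j = cv j) :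
    IsAdjacent (zpt r cu) (zpt r cv) := by
  set a : Pt m n := fun i j k l =>
    (if (k = cu j ∧ j ≠ j0) ∧ l = r i then (1:ℝ) else 0)
    + (if (j = j0 ∧ (k = cu j0 ∨ k = cv j0)) ∧ l = r i then 1 else 0) with ha
  have heval : ∀ (r' : Fin m → Fin 2) (c' : Fin n → Fin 3), lf a (zpt r' c') =
      ((univ.filter fun i => r' i = r i).card : ℝ) *
        ((univ.filter fun j => c' j = cu j ∧ j ≠ j0).card : ℝ)
    + ((univ.filter fun i => r' i = r i).card : ℝ) *
        ((univ.filter fun j => j = j0 ∧ (c' j = cu j0 ∨ c' j = cv j0)).card : ℝ) := by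
    intro r' c'
    rw [lf_zpt, ← sum_ind_prod (fun j => c' j = cu j ∧ j ≠ j0) (fun i => r' i = r i),
        ← sum_ind_prod (fun j => j = j0 ∧ (c' j = cu j0 ∨ c' j = cv j0)) (fun i => r' i = r i),
        ← Finset.sum_add_distrib]
    refine Finset.sum_congr rfl fun i _ => ?_
    rw [← Finset.sum_add_distrib]
  have hMr : ((univ.filter fun i : Fin m => r i = r i).card : ℝ) = m := by simp
  have hFfiltu : (univ.filter fun j : Fin n => cu j = cu j ∧ j ≠ j0)
      = univ.filter (fun j => j ≠ j0) := by
    ext x; simp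
  have hFfiltv : (univ.filter fun j : Fin n => cv j = cu j ∧ j ≠ j0)
      = univ.filter (fun j => j ≠ j0) := by
    ext x
    simp only [Finset.mem_filter, Finset.mem_univ, true_and]
    constructor
    · rintro ⟨-, h⟩; exact h
    · intro h; exact ⟨(hoff x h).symm, h⟩
  have hBu : ((univ.filter fun j : Fin n => j = j0 ∧ (cu j = cu j0 ∨ cu j = cv j0)).card : ℝ)
      = 1 := by
    rw [filter_eq_and_card j0 (fun j => cu j = cu j0 ∨ cu j = cv j0), if_pos (Or.inl rfl)]
    norm_num
  have hBv : ((univ.filter fun j : Fin n => j = j0 ∧ (cv j = cu j0 ∨ cv j = cv j0)).card : ℝ)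
      = 1 := by
    rw [filter_eq_and_card j0 (fun j => cv j = cu j0 ∨ cv j = cv j0), if_pos (Or.inr rfl)]
    norm_num
  have hU : lf a (zpt r cu) =
      (m : ℝ) * ((univ.filter fun j : Fin n => j ≠ j0).card : ℝ) + (m : ℝ) * 1 := by
    rw [heval, hMr, hFfiltu, hBu]
  have hV : lf a (zpt r cv) = lf a (zpt r cu) := by
    rw [heval, hU, hMr, hFfiltv, hBv]
  refine adj_of_functional a (zpt_mem _ _) (zpt_mem _ _) hne hV ?_
  intro w hw hwu hwv
  obtain ⟨r', c', rfl⟩ := intPts_eq_zpt hm hn hw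
  rw [heval, hU]
  have hF1 : (univ.filter fun j : Fin n => j ≠ j0).card + 1 = n := by
    rw [Finset.filter_ne', Finset.card_erase_add_one (Finset.mem_univ j0)]
    simp
  have hTle : (univ.filter fun j => c' j = cu j ∧ j ≠ j0).card
      ≤ (univ.filter fun j : Fin n => j ≠ j0).card := by
    apply Finset.card_le_card
    intro x hx
    simp only [Finset.mem_filter, Finset.mem_univ, true_and] at *
    exact hx.2
  have hBle : (univ.filter fun j => j = j0 ∧ (c' j = cu j0 ∨ c' j = cv j0)).card ≤ 1 := by
    rw [filter_eq_and_card j0 (fun j => c' j = cu j0 ∨ c' j = cv j0)]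
    split <;> omega
  have hEle : (univ.filter fun i => r' i = r i).card ≤ m := filter_card_le _
  have key : (univ.filter fun i => r' i = r i).card *
        (univ.filter fun j => c' j = cu j ∧ j ≠ j0).card
      + (univ.filter fun i => r' i = r i).card *
        (univ.filter fun j => j = j0 ∧ (c' j = cu j0 ∨ c' j = cv j0)).card
      < m * (univ.filter fun j : Fin n => j ≠ j0).card + m := by
    by_cases hEm : (univ.filter fun i => r' i = r i).card = m
    · have hr' : r' = r := funext ((filter_card_eq_iff _).mp hEm)
      have hc'u : c' ≠ cu := fun h => hwu (by rw [h, hr'])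
      have hc'v : c' ≠ cv := fun h => hwv (by rw [h, hr'])
      rw [hEm]
      by_cases hex : ∃ j1, j1 ≠ j0 ∧ c' j1 ≠ cu j1
      · obtain ⟨j1, hj1, hcj1⟩ := hex
        have hTF : (univ.filter fun j => c' j = cu j ∧ j ≠ j0).card
            < (univ.filter fun j : Fin n => j ≠ j0).card := by
          refine Finset.card_lt_card ?_
          refine (Finset.ssubset_iff_of_subset ?_).mpr ⟨j1, ?_, ?_⟩
          · intro x hx
            simp only [Finset.mem_filter, Finset.mem_univ, true_and] at *
            exact hx.2
          · simp [hj1]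
          · simp [hcj1]
        have h1 : ((univ.filter fun j => c' j = cu j ∧ j ≠ j0).card : ℤ) + 1
            ≤ ((univ.filter fun j : Fin n => j ≠ j0).card : ℤ) := by exact_mod_cast hTF
        have h2 : ((univ.filter fun j => j = j0 ∧ (c' j = cu j0 ∨ c' j = cv j0)).card : ℤ)
            ≤ 1 := by exact_mod_cast hBle
        have hm' : (1:ℤ) ≤ (m:ℤ) := by exact_mod_cast hm
        zify
        nlinarith [mul_le_mul_of_nonneg_left h1 (by positivity : (0:ℤ) ≤ (m:ℤ)),
          mul_le_mul_of_nonneg_left h2 (by positivity : (0:ℤ) ≤ (m:ℤ))]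
      · push_neg at hex
        have hcj0u : c' j0 ≠ cu j0 := by
          intro h
          refine hc'u (funext fun j => ?_)
          by_cases hj : j = j0
          · rw [hj]; exact h
          · exact hex j hj
        have hcj0v : c' j0 ≠ cv j0 := by
          intro h
          refine hc'v (funext fun j => ?_)
          by_cases hj : j = j0
          · rw [hj]; exact h
          · rw [hex j hj]; exact hoff j hj
        have hB0 : (univ.filter fun j => j = j0 ∧ (c' j = cu j0 ∨ c' j = cv j0)).card = 0 := by
          rw [filter_eq_and_card j0 (fun j => c' j = cu j0 ∨ c' j = cv j0), if_neg]
          rintro (h | h)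
          · exact hcj0u h
          · exact hcj0v h
        rw [hB0, Nat.mul_zero, Nat.add_zero]
        calc m * (univ.filter fun j => c' j = cu j ∧ j ≠ j0).card
            ≤ m * (univ.filter fun j : Fin n => j ≠ j0).card :=
              Nat.mul_le_mul_left m hTle
          _ < m * (univ.filter fun j : Fin n => j ≠ j0).card + m := by omega
    · have hElt : (univ.filter fun i => r' i = r i).card < m := lt_of_le_of_ne hEle hEm
      have h1 : ((univ.filter fun i => r' i = r i).card : ℤ) ≤ (m:ℤ) - 1 := by
        have : ((univ.filter fun i => r' i = r i).card : ℤ) < (m:ℤ) := by exact_mod_cast hElt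
        linarith
      have h2 : ((univ.filter fun j => c' j = cu j ∧ j ≠ j0).card : ℤ)
          + ((univ.filter fun j => j = j0 ∧ (c' j = cu j0 ∨ c' j = cv j0)).card : ℤ)
          ≤ ((univ.filter fun j : Fin n => j ≠ j0).card : ℤ) + 1 := by
        have hT : ((univ.filter fun j => c' j = cu j ∧ j ≠ j0).card : ℤ)
            ≤ ((univ.filter fun j : Fin n => j ≠ j0).card : ℤ) := by exact_mod_cast hTle
        have hB : ((univ.filter fun j => j = j0 ∧ (c' j = cu j0 ∨ c' j = cv j0)).card : ℤ)
            ≤ 1 := by exact_mod_cast hBle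
        linarith
      have hm' : (1:ℤ) ≤ (m:ℤ) := by exact_mod_cast hm
      have hF' : ((univ.filter fun j : Fin n => j ≠ j0).card : ℤ) + 1 = (n:ℤ) := by
        exact_mod_cast hF1
      zify
      nlinarith [mul_le_mul h1 h2 (by positivity) (by linarith)]
  have keyR : (((univ.filter fun i => r' i = r i).card *
        (univ.filter fun j => c' j = cu j ∧ j ≠ j0).card
      + (univ.filter fun i => r' i = r i).card *
        (univ.filter fun j => j = j0 ∧ (c' j = cu j0 ∨ c' j = cv j0)).card : ℕ) : ℝ)
      < ((m * (univ.filter fun j : Fin n => j ≠ j0).card + m : ℕ) : ℝ) := by exact_mod_cast key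
  push_cast at keyR ⊢
  nlinarith [keyR]

/-- two distinct integral points z(r_u,c_u) and z(r_v,c_v) are adjacent as
vertices of SATP(m,n) iff (a) r_u ≠ r_v and c_u ≠ c_v, or (b) c_u = c_v and r_u, r_v
differ in exactly one coordinate, or (c) r_u = r_v and c_u, c_v differ in exactly one
coordinate. -/
theorem stmt9 (m n : ℕ) (ru rv : Fin m → Fin 2) (cu cv : Fin n → Fin 3)
    (hne : (zpt ru cu : Pt m n) ≠ zpt rv cv) :
    IsAdjacent (zpt ru cu) (zpt rv cv) ↔
      ((ru ≠ rv ∧ cu ≠ cv) ∨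
       (cu = cv ∧ ∃! i, ru i ≠ rv i) ∨
       (ru = rv ∧ ∃! j, cu j ≠ cv j)) := by
  rcases Nat.eq_zero_or_pos m with hm0 | hm
  · subst hm0
    exact absurd (funext fun i => i.elim0) hne
  rcases Nat.eq_zero_or_pos n with hn0 | hn
  · subst hn0
    exact absurd (funext fun i => funext fun j => j.elim0) hne
  constructor
  · intro hadj
    by_contra hcond
    rw [not_or, not_or] at hcond
    obtain ⟨hP, hQ, hR⟩ := hcond
    rcases not_and_or.mp hP with h | h
    · rw [not_not] at h
      subst h
      have hcne : cu ≠ cv := fun hcc => hne (by rw [hcc])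
      obtain ⟨j1, hj1⟩ := Function.ne_iff.mp hcne
      have hnu : ¬ ∃! j, cu j ≠ cv j := fun hE => hR ⟨rfl, hE⟩
      have hex2 : ∃ j2, cu j2 ≠ cv j2 ∧ j2 ≠ j1 := by
        by_contra hno
        push_neg at hno
        exact hnu ⟨j1, hj1, fun j hj => hno j hj⟩
      obtain ⟨j2, hj2, hj21⟩ := hex2
      exact not_adj_cols hm hn ru cu cv j1 j2 (Ne.symm hj21) hj1 hj2 hadj
    · rw [not_not] at h
      subst h
      have hrne : ru ≠ rv := fun hrr => hne (by rw [hrr])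
      obtain ⟨i1, hi1⟩ := Function.ne_iff.mp hrne
      have hnu : ¬ ∃! i, ru i ≠ rv i := fun hE => hQ ⟨rfl, hE⟩
      have hex2 : ∃ i2, ru i2 ≠ rv i2 ∧ i2 ≠ i1 := by
        by_contra hno
        push_neg at hno
        exact hnu ⟨i1, hi1, fun i hi => hno i hi⟩
      obtain ⟨i2, hi2, hi21⟩ := hex2
      exact not_adj_rows hm hn cu ru rv i1 i2 (Ne.symm hi21) hi1 hi2 hadj
  · rintro (⟨hr, hc⟩ | ⟨hc, i0, hi0, hiu⟩ | ⟨hr, j0, hj0, hju⟩)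
    · exact adj_case_a hm hn ru rv cu cv hne hr hc
    · subst hc
      refine adj_case_b hm hn ru rv cu hne i0 hi0 (fun i hi => ?_)
      by_contra h'
      exact hi (hiu i h')
    · subst hr
      refine adj_case_c hm hn ru cu cv hne j0 hj0 (fun j hj => ?_)
      by_contra h'
      exact hj (hju j h')
end
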